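/- Let φ be a 3CNF formula with n ≥ 1 variables x_0,...,x_{n-1} and m ≥ 1 clauses C_0,...,C_{m-1}, where each clause contains only positive literals or only negative literals. Let k = n + m and define P = {ε, a^k} ∪ {a^i b b : C_i positive} and N = {a^i : 0 < i < k} ∪ {a^i b b : C_i negative} ∪ {a^i b a^{k-r} : 0 ≤ i ≤ m-1, 0 ≤ r < k, and (r < m or x_{r-m} ∉ C_i)}. If φ has a satisfying assignment, then there exists a DFA over {a,b} with exactly k states that accepts every word in P and rejects every word in N. -/
import Mathlib


/-- Letter `a` is `false`, letter `b` is `true`. A pure 3CNF formula is given by clauses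
`C i` (sets of variables) with polarity `pos i` (`true` = all-positive clause). If the
formula has a satisfying assignment `β`, then there is a DFA over `{a,b}` with exactly
`k = n + m` states accepting every word of `P` and rejecting every word of `N`. -/
theorem satisfiable_implies_consistent_dfa (n m : ℕ) (hn : 1 ≤ n) (hm : 1 ≤ m)
    (C : Fin m → Finset (Fin n)) (pos : Fin m → Bool)
    (h3 : ∀ i, (C i).card ≤ 3)
    (β : Fin n → Bool) (hβ : ∀ i, ∃ j ∈ C i, β j = pos i) :
    ∃ (σ : Type) (_ : Fintype σ) (A : DFA Bool σ),
      Fintype.card σ = n + m ∧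
      [] ∈ A.accepts ∧
      List.replicate (n + m) false ∈ A.accepts ∧
      (∀ i : Fin m, pos i = true →
        List.replicate (i : ℕ) false ++ [true, true] ∈ A.accepts) ∧
      (∀ i, 0 < i → i < n + m → List.replicate i false ∉ A.accepts) ∧
      (∀ i : Fin m, pos i = false →
        List.replicate (i : ℕ) false ++ [true, true] ∉ A.accepts) ∧
      (∀ i : Fin m, ∀ r : ℕ, r < n + m →
        (r < m ∨ ∀ j : Fin n, m + (j : ℕ) = r → j ∉ C i) →
        List.replicate (i : ℕ) false ++ [true] ++ List.replicate (n + m - r) false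
          ∉ A.accepts) := by
  classical
  choose w hw hwβ using hβ
  set k := n + m with hk
  have hk1 : 0 < k := by omega
  let δ : Fin k → Bool → Fin k := fun q c =>
    if c then
      (if h : (q : ℕ) < m then
        ⟨m + (w ⟨q, h⟩ : ℕ), by have := (w ⟨(q : ℕ), h⟩).isLt; omega⟩
      else if β ⟨(q : ℕ) - m, by have := q.isLt; omega⟩ then ⟨0, hk1⟩ else q)
    else ⟨((q : ℕ) + 1) % k, Nat.mod_lt _ hk1⟩
  let A : DFA Bool (Fin k) := ⟨δ, ⟨0, hk1⟩, {⟨0, hk1⟩}⟩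
  have hstepa : ∀ q : Fin k, A.step q false = ⟨((q : ℕ) + 1) % k, Nat.mod_lt _ hk1⟩ :=
    fun q => rfl
  have hstepb : ∀ q : Fin k,
      A.step q true = (if h : (q : ℕ) < m then
        (⟨m + (w ⟨q, h⟩ : ℕ), by have := (w ⟨(q : ℕ), h⟩).isLt; omega⟩ : Fin k)
      else if β ⟨(q : ℕ) - m, by have := q.isLt; omega⟩ then ⟨0, hk1⟩ else q) :=
    fun q => rfl
  have haccept : A.accept = {(⟨0, hk1⟩ : Fin k)} := rfl
  have heval : ∀ (t : ℕ) (q : Fin k),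
      A.evalFrom q (List.replicate t false) = ⟨((q : ℕ) + t) % k, Nat.mod_lt _ hk1⟩ := by
    intro t
    induction t with
    | zero => intro q; exact Fin.ext (by simp [Nat.mod_eq_of_lt q.isLt])
    | succ t ih =>
      intro q
      rw [List.replicate_succ]
      have h0 : A.evalFrom q (false :: List.replicate t false)
          = A.evalFrom (A.step q false) (List.replicate t false) := rfl
      rw [h0, hstepa, ih]
      apply Fin.ext
      show (((q : ℕ) + 1) % k + t) % k = ((q : ℕ) + (t + 1)) % k
      rw [Nat.mod_add_mod]
      congr 1
      omega
  have hevals : ∀ i : ℕ, (hik : i < k) →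
      A.eval (List.replicate i false) = ⟨i, hik⟩ := by
    intro i hik
    show A.evalFrom A.start _ = _
    rw [heval]
    exact Fin.ext (by simp [A, Nat.mod_eq_of_lt hik])
  -- the state reached after reading a^i b, for a clause index i
  have hbb : ∀ i : Fin m,
      A.eval (List.replicate (i : ℕ) false ++ [true])
        = ⟨m + (w i : ℕ), by have := (w i).isLt; omega⟩ := by
    intro i
    rw [DFA.eval_append_singleton, hevals i (by omega), hstepb, dif_pos i.isLt]
  have hbbb : ∀ i : Fin m,
      A.eval (List.replicate (i : ℕ) false ++ [true, true])
        = (if β (w i) then (⟨0, hk1⟩ : Fin k)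
            else ⟨m + (w i : ℕ), by have := (w i).isLt; omega⟩) := by
    intro i
    have h0 : (List.replicate (i : ℕ) false ++ [true, true])
        = (List.replicate (i : ℕ) false ++ [true]) ++ [true] := by simp
    rw [h0, DFA.eval_append_singleton, hbb, hstepb,
      dif_neg (by omega : ¬ (m + (w i : ℕ) < m))]
    have h1 : (⟨m + (w i : ℕ) - m, by have := (w i).isLt; omega⟩ : Fin n) = w i :=
      Fin.ext (by simp)
    rw [h1]
  refine ⟨Fin k, inferInstance, A, by simp [hk], ?_, ?_, ?_, ?_, ?_, ?_⟩
  · exact rfl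
  · rw [DFA.mem_accepts]
    show A.evalFrom A.start _ ∈ _
    rw [heval, haccept]
    exact Fin.ext (by simp [A])
  · intro i hi
    rw [DFA.mem_accepts, hbbb, hwβ i, hi, if_pos rfl, haccept]
    rfl
  · intro i hi0 hik
    rw [DFA.mem_accepts, hevals i hik, haccept]
    simp [Fin.ext_iff]
    omega
  · intro i hi
    rw [DFA.mem_accepts, hbbb, hwβ i, hi, if_neg (by simp), haccept]
    simp [Fin.ext_iff]
    omega
  · intro i r hr hcond
    rw [DFA.mem_accepts]
    have h0 : A.eval ((List.replicate (i : ℕ) false ++ [true]) ++ List.replicate (k - r) false)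
        = A.evalFrom (A.eval (List.replicate (i : ℕ) false ++ [true]))
            (List.replicate (k - r) false) := DFA.evalFrom_of_append _ _ _ _
    rw [show (List.replicate (i : ℕ) false ++ [true] ++ List.replicate (n + m - r) false)
        = (List.replicate (i : ℕ) false ++ [true]) ++ List.replicate (k - r) false from rfl,
      h0, hbb, heval, haccept]
    have hwlt := (w i).isLt
    have hne : m + (w i : ℕ) ≠ r := by
      rcases hcond with h | h
      · omega
      · intro hcontra
        exact h (w i) hcontra (hw i)
    simp only [Set.mem_singleton_iff, Fin.ext_iff]
    show ¬ ((m + (w i : ℕ) + (k - r)) % k = 0)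
    have hmod : (m + (w i : ℕ) + (k - r)) % k ≠ 0 := by
      rcases Nat.lt_or_ge (m + (w i : ℕ) + (k - r)) k with h | h
      · rw [Nat.mod_eq_of_lt h]; omega
      · have h2 : m + (w i : ℕ) + (k - r) - k < k := by omega
        rw [Nat.mod_eq_sub_mod h, Nat.mod_eq_of_lt h2]
        omega
    exact hmod
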